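/- Let λ ∈ ℝ, λ ≠ 0, and let g : [0,T] → ℂ be continuous with g(T) = 0 (for λ = 0 no extra condition needed). Suppose θ : [0,T] → ℂ is C¹ with θ(0)=0 and satisfies θ'(t) + ∫ₜ^T e^{−iλ(s−t)}(θ(s) − iλθ'(s)) ds = g(t). Let v : [0,T] → ℂ be continuous and define w(t) = ∫₀ᵗ e^{−iλs} v(t−s) ds. Then ∫₀^T [θ(t) w(t) + θ'(t) w'(t)] dt = ∫₀^T g(t) v(t) dt. -/

import Mathlib

open intervalIntegral Set

theorem stmt_5 (T lam : ℝ) (hT : 0 ≤ T) (hlam : lam ≠ 0)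
    (g θ v : ℝ → ℂ) (hg : ContinuousOn g (Icc 0 T)) (hgT : g T = 0)
    (hθ : ContDiff ℝ 1 θ) (hθ0 : θ 0 = 0)
    (hvolterra : ∀ t ∈ Icc 0 T,
      deriv θ t + (∫ s in t..T, Complex.exp (-(Complex.I * (lam : ℂ) * ((s : ℂ) - (t : ℂ)))) *
        (θ s - Complex.I * (lam : ℂ) * deriv θ s)) = g t)
    (hv : Continuous v) (w : ℝ → ℂ)
    (hw : ∀ t : ℝ, w t = ∫ s in (0:ℝ)..t, Complex.exp (-(Complex.I * (lam : ℂ) * (s : ℂ))) * v (t - s)) :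
    ∫ t in (0:ℝ)..T, (θ t * w t + deriv θ t * deriv w t) = ∫ t in (0:ℝ)..T, g t * v t := by
  have hθ'c : Continuous (deriv θ) := hθ.continuous_deriv le_rfl
  have hθc : Continuous θ := hθ.continuous
  set φ : ℝ → ℂ := fun t => θ t - Complex.I * lam * deriv θ t with hφdef
  have hφc : Continuous φ := hθc.sub (continuous_const.mul hθ'c)
  have hexpc : ∀ c : ℂ, Continuous (fun s : ℝ => Complex.exp (c * s)) := fun c =>
    Complex.continuous_exp.comp (continuous_const.mul Complex.continuous_ofReal)
  -- the kernel integral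
  set K : ℝ → ℂ := fun t =>
    Complex.exp (Complex.I * lam * t) *
      ∫ s in t..T, Complex.exp (-(Complex.I * lam * s)) * φ s with hKdef
  have hintc : Continuous (fun s : ℝ => Complex.exp (-(Complex.I * lam * s)) * φ s) := by
    have := (hexpc (-(Complex.I * lam))).mul hφc
    simpa [neg_mul, Pi.mul_def] using this
  -- derivative of the inner integral
  have hG : ∀ t : ℝ, HasDerivAt (fun t => ∫ s in t..T, Complex.exp (-(Complex.I * lam * s)) * φ s)
      (-(Complex.exp (-(Complex.I * lam * t)) * φ t)) t := by
    intro t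
    have h1 : HasDerivAt (fun u => ∫ s in T..u, Complex.exp (-(Complex.I * lam * s)) * φ s)
        (Complex.exp (-(Complex.I * lam * t)) * φ t) t :=
      intervalIntegral.integral_hasDerivAt_right (hintc.intervalIntegrable _ _)
        (hintc.stronglyMeasurableAtFilter _ _) hintc.continuousAt
    have := h1.neg
    simp only [Pi.neg_def, ← intervalIntegral.integral_symm] at this
    exact this
  have hKderiv : ∀ t : ℝ, HasDerivAt K (Complex.I * lam * K t - φ t) t := by
    intro t
    have he : HasDerivAt (fun t : ℝ => Complex.exp (Complex.I * lam * t))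
        (Complex.I * lam * Complex.exp (Complex.I * lam * t)) t := by
      have : HasDerivAt (fun t : ℝ => Complex.I * lam * t) (Complex.I * lam) t := by
        simpa using (Complex.ofRealCLM.hasDerivAt (x := t)).const_mul (Complex.I * lam)
      simpa [mul_comm] using this.cexp
    have := he.mul (hG t)
    simp only [Pi.mul_def] at this
    convert this using 1
    case e'_4 => rfl
    have hee : Complex.exp (Complex.I * lam * t) * Complex.exp (-(Complex.I * lam * t)) = 1 := by
      rw [← Complex.exp_add]; simp
    simp only [hKdef]
    linear_combination (φ t) * hee
  have hKc : Continuous K := by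
    have : Differentiable ℝ K := fun t => (hKderiv t).differentiableAt
    exact this.continuous
  -- rewrite w
  have hw2 : ∀ t : ℝ, w t = Complex.exp (-(Complex.I * lam * t)) *
      ∫ u in (0:ℝ)..t, Complex.exp (Complex.I * lam * u) * v u := by
    intro t
    rw [hw t]
    have hsub := intervalIntegral.integral_comp_sub_left (a := (0:ℝ)) (b := t)
      (fun u : ℝ => Complex.exp (-(Complex.I * lam * ((t - u : ℝ) : ℂ))) * v u) t
    simp only [sub_sub_cancel, sub_self, sub_zero] at hsub
    rw [hsub, ← intervalIntegral.integral_const_mul]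
    congr 1
    ext u
    rw [← mul_assoc, ← Complex.exp_add]
    push_cast
    ring_nf
  have hwderiv : ∀ t : ℝ, HasDerivAt w (v t - Complex.I * lam * w t) t := by
    intro t
    have hvint : Continuous (fun u : ℝ => Complex.exp (Complex.I * lam * u) * v u) :=
      (hexpc (Complex.I * lam)).mul hv
    have hW : HasDerivAt (fun u => ∫ x in (0:ℝ)..u, Complex.exp (Complex.I * lam * x) * v x)
        (Complex.exp (Complex.I * lam * t) * v t) t :=
      intervalIntegral.integral_hasDerivAt_right (hvint.intervalIntegrable _ _)
        (hvint.stronglyMeasurableAtFilter _ _) hvint.continuousAt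
    have he : HasDerivAt (fun t : ℝ => Complex.exp (-(Complex.I * lam * t)))
        (-(Complex.I * lam) * Complex.exp (-(Complex.I * lam * t))) t := by
      have : HasDerivAt (fun t : ℝ => -(Complex.I * lam) * t) (-(Complex.I * lam)) t := by
        simpa using (Complex.ofRealCLM.hasDerivAt (x := t)).const_mul (-(Complex.I * lam))
      have := this.cexp
      simpa [neg_mul, mul_comm] using this
    have hp := he.mul hW
    simp only [Pi.mul_def] at hp
    have hfun : w = fun t : ℝ => Complex.exp (-(Complex.I * lam * t)) *
        ∫ x in (0:ℝ)..t, Complex.exp (Complex.I * lam * x) * v x := funext hw2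
    rw [hfun]
    convert hp using 1
    case e'_4 => rfl
    have hee : Complex.exp (-(Complex.I * lam * t)) * Complex.exp (Complex.I * lam * t) = 1 := by
      rw [← Complex.exp_add]; simp
    linear_combination (-(v t)) * hee
  have hwc : Continuous w := by
    have : Differentiable ℝ w := fun t => (hwderiv t).differentiableAt
    exact this.continuous
  have hwderiv' : ∀ t : ℝ, deriv w t = v t - Complex.I * lam * w t := fun t => (hwderiv t).deriv
  -- K equals g - θ' on [0,T]
  have hKeq : ∀ t ∈ Icc (0:ℝ) T, K t = g t - deriv θ t := by
    intro t ht
    have h := hvolterra t ht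
    have hrw : (∫ s in t..T, Complex.exp (-(Complex.I * (lam : ℂ) * ((s : ℂ) - (t : ℂ)))) *
        (θ s - Complex.I * (lam : ℂ) * deriv θ s)) = K t := by
      simp only [hKdef]
      rw [← intervalIntegral.integral_const_mul]
      congr 1
      ext s
      rw [← mul_assoc, ← Complex.exp_add]
      simp only [φ]
      ring_nf
    rw [hrw] at h
    linear_combination h
  -- product derivative
  have hKw : ∀ t : ℝ, HasDerivAt (fun t => K t * w t) (K t * v t - φ t * w t) t := by
    intro t
    have := (hKderiv t).mul (hwderiv t)
    simp only [Pi.mul_def] at this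
    convert this using 1
    case e'_4 => rfl
    ring
  have hKwint : IntervalIntegrable (fun t => K t * v t - φ t * w t) MeasureTheory.volume 0 T :=
    ((hKc.mul hv).sub (hφc.mul hwc)).intervalIntegrable _ _
  have hftc : ∫ t in (0:ℝ)..T, (K t * v t - φ t * w t) = K T * w T - K 0 * w 0 :=
    intervalIntegral.integral_eq_sub_of_hasDerivAt (fun t _ => hKw t) hKwint
  have hKT : K T = 0 := by simp [hKdef]
  have hw0 : w 0 = 0 := by rw [hw 0]; simp
  -- pointwise identity on LHS
  have hpt : ∀ t : ℝ, θ t * w t + deriv θ t * deriv w t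
      = (deriv θ t + K t) * v t - (K t * v t - φ t * w t) := by
    intro t
    rw [hwderiv' t]
    simp only [hφdef]
    ring
  calc ∫ t in (0:ℝ)..T, (θ t * w t + deriv θ t * deriv w t)
      = ∫ t in (0:ℝ)..T, ((deriv θ t + K t) * v t - (K t * v t - φ t * w t)) := by
        congr 1; ext t; exact hpt t
    _ = (∫ t in (0:ℝ)..T, (deriv θ t + K t) * v t)
        - ∫ t in (0:ℝ)..T, (K t * v t - φ t * w t) := by
        apply intervalIntegral.integral_sub
        · exact (((hθ'c.add hKc).mul hv)).intervalIntegrable _ _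
        · exact hKwint
    _ = ∫ t in (0:ℝ)..T, (deriv θ t + K t) * v t := by
        rw [hftc, hKT, hw0]; simp
    _ = ∫ t in (0:ℝ)..T, g t * v t := by
        apply intervalIntegral.integral_congr
        intro t ht
        rw [uIcc_of_le hT] at ht
        show (deriv θ t + K t) * v t = g t * v t
        rw [hKeq t ht]; ring
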